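/- (General Barnett decomposition formula) Let f = a_0 x^d + ... + a_d ∈ ℚ[x] with d ≥ 1 and a_0 ≠ 0, let X be the companion matrix of f, and let g ∈ ℚ[x] with deg g ≤ d. Then g(X)·B(1) = B(g); equivalently, since B(1) is invertible, g(X) = B(g)·B(1)^{-1}, where g(X) denotes the evaluation of g at the matrix X. -/

import Mathlib

open Polynomial

private lemma fin2_finsupp_eq (u : Fin 2 →₀ ℕ) (i j : ℕ) :
    u = Finsupp.single 0 i + Finsupp.single 1 j ↔ u 0 = i ∧ u 1 = j := by
  constructor
  · rintro rfl; simp [Finsupp.single_apply]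
  · rintro ⟨h0, h1⟩
    ext x
    fin_cases x <;> simp [Finsupp.single_apply, ← h0, ← h1]

private lemma coeff_aeval_CXX (δ : MvPolynomial (Fin 2) ℚ) (i j : ℕ) :
    ((MvPolynomial.aeval ![Polynomial.C Polynomial.X,
        (Polynomial.X : Polynomial (Polynomial ℚ))] δ).coeff j).coeff i
      = MvPolynomial.coeff (Finsupp.single 0 i + Finsupp.single 1 j) δ := by
  induction δ using MvPolynomial.induction_on' with
  | add p q hp hq => simp [map_add, hp, hq]
  | monomial u c =>
    rw [MvPolynomial.aeval_monomial, MvPolynomial.coeff_monomial]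
    rw [Finsupp.prod_fintype _ _ (fun _ => pow_zero _), Fin.prod_univ_two]
    simp only [Matrix.cons_val_zero, Matrix.cons_val_one, Matrix.head_cons]
    rw [show (algebraMap ℚ (Polynomial (Polynomial ℚ))) c
        = Polynomial.C (Polynomial.C c) from rfl]
    rw [← Polynomial.C_pow, ← mul_assoc, ← Polynomial.C_mul]
    rw [Polynomial.coeff_C_mul, Polynomial.coeff_X_pow, mul_ite, mul_one, mul_zero,
      apply_ite (fun q : Polynomial ℚ => q.coeff i), Polynomial.coeff_zero,
      Polynomial.coeff_C_mul, Polynomial.coeff_X_pow]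
    simp only [fin2_finsupp_eq]
    by_cases h0 : u 0 = i <;> by_cases h1 : u 1 = j <;> simp [h0, h1, eq_comm] <;> (try split_ifs) <;> grind

private lemma coeff_aeval_XCX (δ : MvPolynomial (Fin 2) ℚ) (i j : ℕ) :
    ((MvPolynomial.aeval ![(Polynomial.X : Polynomial (Polynomial ℚ)),
        Polynomial.C Polynomial.X] δ).coeff i).coeff j
      = MvPolynomial.coeff (Finsupp.single 0 i + Finsupp.single 1 j) δ := by
  induction δ using MvPolynomial.induction_on' with
  | add p q hp hq => simp [map_add, hp, hq]
  | monomial u c =>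
    rw [MvPolynomial.aeval_monomial, MvPolynomial.coeff_monomial]
    rw [Finsupp.prod_fintype _ _ (fun _ => pow_zero _), Fin.prod_univ_two]
    simp only [Matrix.cons_val_zero, Matrix.cons_val_one, Matrix.head_cons]
    rw [show (algebraMap ℚ (Polynomial (Polynomial ℚ))) c
        = Polynomial.C (Polynomial.C c) from rfl]
    rw [← Polynomial.C_pow, mul_comm ((Polynomial.X : Polynomial (Polynomial ℚ)) ^ u 0),
      ← mul_assoc, ← Polynomial.C_mul]
    rw [Polynomial.coeff_C_mul, Polynomial.coeff_X_pow, mul_ite, mul_one, mul_zero,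
      apply_ite (fun q : Polynomial ℚ => q.coeff j), Polynomial.coeff_zero,
      Polynomial.coeff_C_mul, Polynomial.coeff_X_pow]
    simp only [fin2_finsupp_eq]
    by_cases h0 : u 0 = i <;> by_cases h1 : u 1 = j <;> simp [h0, h1, eq_comm] <;> (try split_ifs) <;> grind

private lemma aeval_outerX (p : Polynomial ℚ) :
    Polynomial.aeval (Polynomial.X : Polynomial (Polynomial ℚ)) p = p.map Polynomial.C := by
  induction p using Polynomial.induction_on' with
  | add p q hp hq => simp [hp, hq]
  | monomial n c =>
    simp [Polynomial.aeval_monomial, Polynomial.map_monomial,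
      ← Polynomial.C_mul_X_pow_eq_monomial]

private lemma aeval_CX (p : Polynomial ℚ) :
    Polynomial.aeval (Polynomial.C Polynomial.X : Polynomial (Polynomial ℚ)) p
      = Polynomial.C p := by
  induction p using Polynomial.induction_on' with
  | add p q hp hq => simp [hp, hq]
  | monomial n c =>
    rw [Polynomial.aeval_monomial, ← Polynomial.C_pow, ← Polynomial.C_mul_X_pow_eq_monomial]
    rw [show (algebraMap ℚ (Polynomial (Polynomial ℚ))) c
        = Polynomial.C (Polynomial.C c) from rfl]
    rw [← Polynomial.C_mul]

private lemma companion_mulVec (d : ℕ) (hd : 1 ≤ d) (a : ℕ → ℚ) (ha : a 0 ≠ 0)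
    (f₀ : Polynomial ℚ) (hm : f₀.Monic) (hnd : f₀.natDegree = d)
    (hcf : ∀ m : ℕ, m < d → f₀.coeff m = (a 0)⁻¹ * a (d - m))
    (X : Matrix (Fin d) (Fin d) ℚ)
    (hX : ∀ i j : Fin d, X i j =
      if (j : ℕ) = d - 1 then -a (d - (i : ℕ)) / a 0
      else if (i : ℕ) = (j : ℕ) + 1 then 1 else 0)
    (p : Polynomial ℚ) :
    X.mulVec (fun i : Fin d => (p %ₘ f₀).coeff (i : ℕ))
      = fun i : Fin d => ((Polynomial.X * p) %ₘ f₀).coeff (i : ℕ) := by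
  set r := p %ₘ f₀ with hr
  have hdeg0 : f₀.degree = (d : ℕ) := by
    rw [Polynomial.degree_eq_natDegree hm.ne_zero, hnd]
  have hrd : ∀ m : ℕ, d ≤ m → r.coeff m = 0 := by
    intro m hm'
    apply Polynomial.coeff_eq_zero_of_degree_lt
    calc r.degree < f₀.degree := Polynomial.degree_modByMonic_lt p hm
    _ = (d : ℕ) := hdeg0
    _ ≤ (m : ℕ) := by exact_mod_cast Nat.cast_le.mpr hm'
  have hf₀d : f₀.coeff d = 1 := by rw [← hnd]; exact hm.coeff_natDegree
  have hXp : (Polynomial.X * p) %ₘ f₀ = (Polynomial.X * r) %ₘ f₀ := by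
    conv_lhs => rw [← Polynomial.modByMonic_add_div p f₀]
    rw [mul_add, show Polynomial.X * (f₀ * (p /ₘ f₀)) = f₀ * (Polynomial.X * (p /ₘ f₀)) by ring,
      Polynomial.add_modByMonic,
      (Polynomial.modByMonic_eq_zero_iff_dvd hm).mpr (dvd_mul_right _ _), add_zero]
  have hrem : (Polynomial.X * r) %ₘ f₀
      = Polynomial.X * r - Polynomial.C (r.coeff (d - 1)) * f₀ := by
    refine (Polynomial.div_modByMonic_unique (Polynomial.C (r.coeff (d - 1)))
      (Polynomial.X * r - Polynomial.C (r.coeff (d - 1)) * f₀) hm ⟨by ring, ?_⟩).2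
    rw [hdeg0]
    rw [Polynomial.degree_lt_iff_coeff_zero]
    intro m hm'
    obtain ⟨m', rfl⟩ : ∃ m', m = m' + 1 := ⟨m - 1, by omega⟩
    rw [Polynomial.coeff_sub, Polynomial.coeff_C_mul, Polynomial.coeff_X_mul]
    rcases eq_or_lt_of_le hm' with heq | hlt
    · have : m' + 1 = d := by omega
      rw [this] at *
      rw [hf₀d]
      have : m' = d - 1 := by omega
      rw [this, mul_one, sub_self]
    · have h1 : r.coeff m' = 0 := hrd m' (by omega)
      have h2 : f₀.coeff (m' + 1) = 0 :=
        Polynomial.coeff_eq_zero_of_natDegree_lt (by omega)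
      rw [h1, h2, mul_zero, sub_zero]
  funext i
  rw [hXp, hrem, Polynomial.coeff_sub, Polynomial.coeff_C_mul]
  have hlastlt : d - 1 < d := by omega
  set lastj : Fin d := ⟨d - 1, hlastlt⟩ with hlastj
  rw [Matrix.mulVec, dotProduct,
    Finset.sum_eq_sum_sdiff_singleton_add (Finset.mem_univ lastj)]
  have hlastval : X i lastj * r.coeff ((lastj : ℕ))
      = -(r.coeff (d - 1) * ((a 0)⁻¹ * a (d - (i : ℕ)))) := by
    rw [hX]
    have hc : ((lastj : Fin d) : ℕ) = d - 1 := rfl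
    rw [if_pos hc, div_eq_mul_inv]
    ring
  rw [hlastval]
  by_cases hi : (i : ℕ) = 0
  · have hsum : ∑ j ∈ Finset.univ \ {lastj}, X i j * r.coeff ((j : ℕ)) = 0 := by
      apply Finset.sum_eq_zero
      intro j hj
      have hj' : (j : ℕ) ≠ d - 1 := by
        intro h
        exact (Finset.mem_sdiff.mp hj).2 (Finset.mem_singleton.mpr (Fin.ext h))
      rw [hX, if_neg hj', if_neg (by omega), zero_mul]
    rw [hsum, hi, Polynomial.mul_coeff_zero, Polynomial.coeff_X_zero, zero_mul,
      hcf 0 (by omega)]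
    have : d - (0:ℕ) = d := by omega
    rw [this]
    ring
  · obtain ⟨m, hmeq⟩ : ∃ m, (i : ℕ) = m + 1 := ⟨(i : ℕ) - 1, by omega⟩
    have hmd : m < d := by have := i.isLt; omega
    set jm : Fin d := ⟨m, hmd⟩ with hjm
    have hjmne : jm ≠ lastj := by
      intro h
      have := congrArg Fin.val h
      simp only [hjm, hlastj] at this
      have := i.isLt; omega
    have hsum0 : ∑ j ∈ Finset.univ \ {lastj}, X i j * r.coeff ((j : ℕ))
        = X i jm * r.coeff ((jm : ℕ)) := by
      apply Finset.sum_eq_single_of_mem jm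
        (Finset.mem_sdiff.mpr ⟨Finset.mem_univ _, by simp [hjmne]⟩)
      intro j hj hjne
      have hj' : (j : ℕ) ≠ d - 1 := by
        intro h
        exact (Finset.mem_sdiff.mp hj).2 (Finset.mem_singleton.mpr (Fin.ext h))
      have hj'' : ¬ ((i : ℕ) = (j : ℕ) + 1) := by
        intro h
        apply hjne
        apply Fin.ext
        simp only [hjm]
        omega
      rw [hX, if_neg hj', if_neg hj'', zero_mul]
    have hsum : ∑ j ∈ Finset.univ \ {lastj}, X i j * r.coeff ((j : ℕ)) = r.coeff m := by
      rw [hsum0]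
      have hjm' : (jm : ℕ) ≠ d - 1 := by
        simp only [hjm]; have := i.isLt; omega
      rw [hX, if_neg hjm', if_pos (by simp [hjm, hmeq]), one_mul]
    rw [hsum, hmeq, Polynomial.coeff_X_mul, hcf (m+1) (by omega), ← hmeq]
    ring

private lemma companion_aeval_mulVec (d : ℕ) (hd : 1 ≤ d) (a : ℕ → ℚ) (ha : a 0 ≠ 0)
    (f₀ : Polynomial ℚ) (hm : f₀.Monic) (hnd : f₀.natDegree = d)
    (hcf : ∀ m : ℕ, m < d → f₀.coeff m = (a 0)⁻¹ * a (d - m))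
    (X : Matrix (Fin d) (Fin d) ℚ)
    (hX : ∀ i j : Fin d, X i j =
      if (j : ℕ) = d - 1 then -a (d - (i : ℕ)) / a 0
      else if (i : ℕ) = (j : ℕ) + 1 then 1 else 0)
    (q p : Polynomial ℚ) :
    (Polynomial.aeval X q).mulVec (fun i : Fin d => (p %ₘ f₀).coeff (i : ℕ))
      = fun i : Fin d => ((q * p) %ₘ f₀).coeff (i : ℕ) := by
  have hpow : ∀ (n : ℕ) (p : Polynomial ℚ),
      (X ^ n).mulVec (fun i : Fin d => (p %ₘ f₀).coeff (i : ℕ))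
        = fun i : Fin d => ((Polynomial.X ^ n * p) %ₘ f₀).coeff (i : ℕ) := by
    intro n
    induction n with
    | zero => intro p; simp [Matrix.one_mulVec]
    | succ n ih =>
      intro p
      rw [pow_succ', ← Matrix.mulVec_mulVec, ih p,
        companion_mulVec d hd a ha f₀ hm hnd hcf X hX (Polynomial.X ^ n * p)]
      funext i
      rw [show Polynomial.X * (Polynomial.X ^ n * p) = Polynomial.X ^ (n + 1) * p by ring]
  induction q using Polynomial.induction_on' with
  | add u v hu hv =>
    rw [map_add, Matrix.add_mulVec, hu, hv]
    funext i
    rw [add_mul, Polynomial.add_modByMonic]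
    simp
  | monomial n c =>
    rw [Polynomial.aeval_monomial, Algebra.algebraMap_eq_smul_one, smul_mul_assoc, one_mul,
      Matrix.smul_mulVec, hpow n p]
    funext i
    have hmp : Polynomial.monomial n c * p = c • (Polynomial.X ^ n * p) := by
      rw [← Polynomial.C_mul_X_pow_eq_monomial, Polynomial.smul_eq_C_mul]
      ring
    rw [hmp, Polynomial.smul_modByMonic]
    simp

private lemma coeff_f_explicit (d : ℕ) (a : ℕ → ℚ) (f : Polynomial ℚ)
    (hf : f = ∑ k ∈ Finset.range (d + 1), C (a k) * Polynomial.X ^ (d - k)) :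
    ∀ m : ℕ, f.coeff m = if m ≤ d then a (d - m) else 0 := by
  intro m
  rw [hf, Polynomial.finset_sum_coeff]
  have hterm : ∀ k, (C (a k) * Polynomial.X ^ (d - k)).coeff m
      = if m = d - k then a k else 0 := by
    intro k
    rw [Polynomial.coeff_C_mul, Polynomial.coeff_X_pow, mul_ite, mul_one, mul_zero]
  simp only [hterm]
  by_cases hm : m ≤ d
  · rw [if_pos hm]
    rw [Finset.sum_eq_single_of_mem (d - m) (Finset.mem_range.mpr (by omega))]
    · rw [if_pos (by omega)]
    · intro k hk hne
      have := Finset.mem_range.mp hk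
      exact if_neg (by omega)
  · rw [if_neg hm]
    apply Finset.sum_eq_zero
    intro k hk
    exact if_neg (by omega)

private lemma delta1_explicit (d : ℕ) (a : ℕ → ℚ) (f : Polynomial ℚ)
    (hf : f = ∑ k ∈ Finset.range (d + 1), C (a k) * Polynomial.X ^ (d - k))
    (δ1 : MvPolynomial (Fin 2) ℚ)
    (hδ1 : (MvPolynomial.X 0 - MvPolynomial.X 1) * δ1 =
      Polynomial.aeval (MvPolynomial.X 0) f - Polynomial.aeval (MvPolynomial.X 1) f) :
    δ1 = ∑ k ∈ Finset.range (d + 1), MvPolynomial.C (a k) *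
      ∑ t ∈ Finset.range (d - k),
        MvPolynomial.X 0 ^ t * MvPolynomial.X 1 ^ (d - k - 1 - t) := by
  have hne : (MvPolynomial.X 0 - MvPolynomial.X 1 : MvPolynomial (Fin 2) ℚ) ≠ 0 :=
    sub_ne_zero.mpr (fun h => absurd (MvPolynomial.X_injective h) (by decide))
  apply mul_left_cancel₀ hne
  rw [hδ1, hf]
  simp only [map_sum, map_mul, map_pow, Polynomial.aeval_X, Polynomial.aeval_C,
    MvPolynomial.algebraMap_eq]
  rw [Finset.mul_sum, ← Finset.sum_sub_distrib]
  apply Finset.sum_congr rfl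
  intro k _
  linear_combination (-(MvPolynomial.C (a k) : MvPolynomial (Fin 2) ℚ)) *
    geom_sum₂_mul (MvPolynomial.X 0 : MvPolynomial (Fin 2) ℚ) (MvPolynomial.X 1) (d - k)

private lemma fin2_finsupp_eq' (u : Fin 2 →₀ ℕ) (i j : ℕ) :
    u = Finsupp.single 0 i + Finsupp.single 1 j ↔ u 0 = i ∧ u 1 = j := by
  constructor
  · rintro rfl; simp [Finsupp.single_apply]
  · rintro ⟨h0, h1⟩
    ext x
    fin_cases x <;> simp [Finsupp.single_apply, ← h0, ← h1]

private lemma coeff_delta1 (d : ℕ) (hd : 1 ≤ d) (a : ℕ → ℚ) (i j : ℕ)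
    (hi : i < d) (hj : j < d) :
    MvPolynomial.coeff (Finsupp.single (0 : Fin 2) i + Finsupp.single 1 j)
      ((∑ k ∈ Finset.range (d + 1), MvPolynomial.C (a k) *
        ∑ t ∈ Finset.range (d - k),
          MvPolynomial.X 0 ^ t * MvPolynomial.X 1 ^ (d - k - 1 - t)
        : MvPolynomial (Fin 2) ℚ))
    = if i + j ≤ d - 1 then a (d - 1 - i - j) else 0 := by
  have hterm : ∀ k t : ℕ, MvPolynomial.coeff (Finsupp.single 0 i + Finsupp.single 1 j)
      ((MvPolynomial.X 0 ^ t * MvPolynomial.X 1 ^ (d - k - 1 - t) : MvPolynomial (Fin 2) ℚ))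
      = if t = i ∧ d - k - 1 - t = j then 1 else 0 := by
    intro k t
    rw [MvPolynomial.X_pow_eq_monomial, MvPolynomial.X_pow_eq_monomial,
      MvPolynomial.monomial_mul, MvPolynomial.coeff_monomial, mul_one]
    have e0 : ((Finsupp.single (0 : Fin 2) t + Finsupp.single 1 (d - k - 1 - t) :
        Fin 2 →₀ ℕ)) 0 = t := by
      rw [Finsupp.add_apply, Finsupp.single_eq_same, Finsupp.single_eq_of_ne (by decide),
        add_zero]
    have e1 : ((Finsupp.single (0 : Fin 2) t + Finsupp.single 1 (d - k - 1 - t) :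
        Fin 2 →₀ ℕ)) 1 = d - k - 1 - t := by
      rw [Finsupp.add_apply, Finsupp.single_eq_of_ne (by decide), Finsupp.single_eq_same,
        zero_add]
    have h := (fin2_finsupp_eq' (Finsupp.single (0 : Fin 2) t
      + Finsupp.single 1 (d - k - 1 - t)) i j)
    rw [e0, e1] at h
    rw [if_congr h rfl rfl]
  rw [MvPolynomial.coeff_sum]
  simp only [MvPolynomial.coeff_C_mul, MvPolynomial.coeff_sum, hterm]
  by_cases hij : i + j ≤ d - 1
  · rw [if_pos hij]
    set k₀ : ℕ := d - 1 - i - j with hk₀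
    rw [Finset.sum_eq_single_of_mem k₀ (Finset.mem_range.mpr (by omega))]
    · have hinner : ∀ t ∈ Finset.range (d - k₀),
          (if t = i ∧ d - k₀ - 1 - t = j then (1:ℚ) else 0) = if t = i then 1 else 0 := by
        intro t ht
        have ht' := Finset.mem_range.mp ht
        exact if_congr (by omega) rfl rfl
      rw [Finset.sum_congr rfl hinner, Finset.sum_ite_eq' (Finset.range (d - k₀)) i
        (fun _ => (1:ℚ)), if_pos (Finset.mem_range.mpr (by omega)), mul_one]
    · intro k hk hne
      have hk' := Finset.mem_range.mp hk
      have : ∑ t ∈ Finset.range (d - k),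
          (if t = i ∧ d - k - 1 - t = j then (1:ℚ) else 0) = 0 := by
        apply Finset.sum_eq_zero
        intro t ht
        have ht' := Finset.mem_range.mp ht
        exact if_neg (by omega)
      rw [this, mul_zero]
  · rw [if_neg hij]
    apply Finset.sum_eq_zero
    intro k hk
    have : ∑ t ∈ Finset.range (d - k),
        (if t = i ∧ d - k - 1 - t = j then (1:ℚ) else 0) = 0 := by
      apply Finset.sum_eq_zero
      intro t ht
      have ht' := Finset.mem_range.mp ht
      exact if_neg (by omega)
    rw [this, mul_zero]

private lemma B1_det_isUnit (d : ℕ) (hd : 1 ≤ d) (a : ℕ → ℚ) (ha : a 0 ≠ 0)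
    (B1 : Matrix (Fin d) (Fin d) ℚ)
    (hB1e : ∀ i j : Fin d, B1 i j =
      if (i : ℕ) + (j : ℕ) ≤ d - 1 then a (d - 1 - (i : ℕ) - (j : ℕ)) else 0) :
    IsUnit B1.det := by
  have h1 : (B1.submatrix id ⇑(Fin.revPerm : Equiv.Perm (Fin d))).det
      = (Equiv.Perm.sign (Fin.revPerm : Equiv.Perm (Fin d)) : ℚ) * B1.det :=
    Matrix.det_permute' _ _
  have htri : (B1.submatrix id ⇑(Fin.revPerm : Equiv.Perm (Fin d))).BlockTriangular id := by
    intro i j hij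
    have hij' : (j : ℕ) < (i : ℕ) := hij
    have h1 := i.isLt
    have h3 : (((Fin.revPerm : Equiv.Perm (Fin d)) j : Fin d) : ℕ) = d - ((j : ℕ) + 1) :=
      Fin.val_rev j
    rw [Matrix.submatrix_apply, id_eq, hB1e, h3, if_neg (by omega)]
  have h2 : (B1.submatrix id ⇑(Fin.revPerm : Equiv.Perm (Fin d))).det = a 0 ^ d := by
    rw [Matrix.det_of_upperTriangular htri]
    have : ∀ i ∈ Finset.univ, (B1.submatrix id ⇑(Fin.revPerm : Equiv.Perm (Fin d))) i i
        = a 0 := by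
      intro i _
      have h1 := i.isLt
      have h3 : (((Fin.revPerm : Equiv.Perm (Fin d)) i : Fin d) : ℕ) = d - ((i : ℕ) + 1) :=
        Fin.val_rev i
      rw [Matrix.submatrix_apply, id_eq, hB1e, h3, if_pos (by omega)]
      congr 1
      omega
    rw [Finset.prod_congr rfl this, Finset.prod_const, Finset.card_univ, Fintype.card_fin]
  have hdet : B1.det ≠ 0 := by
    intro h
    rw [h, mul_zero] at h1
    exact pow_ne_zero d ha (h1 ▸ h2).symm
  exact isUnit_iff_ne_zero.mpr hdet

set_option maxHeartbeats 1000000 in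
/-- General Barnett decomposition formula: for `g` with `deg g ≤ d`,
`g(X)·B(1) = B(g)`, equivalently `g(X) = B(g)·B(1)⁻¹`. -/
theorem stmt_10 (d : ℕ) (hd : 1 ≤ d) (a : ℕ → ℚ) (ha : a 0 ≠ 0)
    (f : Polynomial ℚ)
    (hf : f = ∑ k ∈ Finset.range (d + 1), C (a k) * Polynomial.X ^ (d - k))
    (X : Matrix (Fin d) (Fin d) ℚ)
    (hX : ∀ i j : Fin d, X i j =
      if (j : ℕ) = d - 1 then -a (d - (i : ℕ)) / a 0
      else if (i : ℕ) = (j : ℕ) + 1 then 1 else 0)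
    (g : Polynomial ℚ) (hg : g.natDegree ≤ d)
    (δ1 δg : MvPolynomial (Fin 2) ℚ)
    (hδ1 : (MvPolynomial.X 0 - MvPolynomial.X 1) * δ1 =
      Polynomial.aeval (MvPolynomial.X 0) f - Polynomial.aeval (MvPolynomial.X 1) f)
    (hδg : (MvPolynomial.X 0 - MvPolynomial.X 1) * δg =
      Polynomial.aeval (MvPolynomial.X 0) f * Polynomial.aeval (MvPolynomial.X 1) g
        - Polynomial.aeval (MvPolynomial.X 1) f * Polynomial.aeval (MvPolynomial.X 0) g)
    (B1 Bg : Matrix (Fin d) (Fin d) ℚ)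
    (hB1 : ∀ i j : Fin d, B1 i j =
      MvPolynomial.coeff (Finsupp.single 0 (i : ℕ) + Finsupp.single 1 (j : ℕ)) δ1)
    (hBg : ∀ i j : Fin d, Bg i j =
      MvPolynomial.coeff (Finsupp.single 0 (i : ℕ) + Finsupp.single 1 (j : ℕ)) δg) :
    Polynomial.aeval X g * B1 = Bg ∧ Polynomial.aeval X g = Bg * B1⁻¹ := by
  -- basic facts about f
  have hfc := coeff_f_explicit d a f hf
  have hfnd : f.natDegree = d := by
    apply le_antisymm
    · rw [Polynomial.natDegree_le_iff_coeff_eq_zero]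
      intro m hm
      rw [hfc m, if_neg (by omega)]
    · apply Polynomial.le_natDegree_of_ne_zero
      rw [hfc d, if_pos le_rfl, Nat.sub_self]
      exact ha
  set f₀ : Polynomial ℚ := Polynomial.C (a 0)⁻¹ * f with hf₀
  have hf₀nd : f₀.natDegree = d := by
    rw [hf₀, Polynomial.natDegree_C_mul (inv_ne_zero ha), hfnd]
  have hmon : f₀.Monic := by
    rw [Polynomial.Monic, Polynomial.leadingCoeff, hf₀nd, hf₀, Polynomial.coeff_C_mul,
      hfc d, if_pos le_rfl, Nat.sub_self]
    exact inv_mul_cancel₀ ha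
  have hcf : ∀ m : ℕ, m < d → f₀.coeff m = (a 0)⁻¹ * a (d - m) := by
    intro m hm
    rw [hf₀, Polynomial.coeff_C_mul, hfc m, if_pos (by omega)]
  have hffac : f = Polynomial.C (a 0) * f₀ := by
    rw [hf₀, ← mul_assoc, ← Polynomial.C_mul, mul_inv_cancel₀ ha, Polynomial.C_1, one_mul]
  have hdegf₀ : f₀.degree = (d : ℕ) := by
    rw [Polynomial.degree_eq_natDegree hmon.ne_zero, hf₀nd]
  -- transfer the Bezout identities to ℚ[x][y]
  set Φ : MvPolynomial (Fin 2) ℚ →ₐ[ℚ] Polynomial (Polynomial ℚ) :=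
    MvPolynomial.aeval ![Polynomial.C Polynomial.X, Polynomial.X] with hΦ
  set Φ' : MvPolynomial (Fin 2) ℚ →ₐ[ℚ] Polynomial (Polynomial ℚ) :=
    MvPolynomial.aeval ![Polynomial.X, Polynomial.C Polynomial.X] with hΦ'
  set D1 : Polynomial (Polynomial ℚ) := Φ δ1 with hD1
  set Dg : Polynomial (Polynomial ℚ) := Φ δg with hDg
  have e1 : (Polynomial.C Polynomial.X - Polynomial.X) * D1
      = Polynomial.C f - f.map Polynomial.C := by
    have h := congrArg Φ hδ1
    rw [map_mul, map_sub, map_sub, MvPolynomial.aeval_X, MvPolynomial.aeval_X,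
      ← Polynomial.aeval_algHom_apply, ← Polynomial.aeval_algHom_apply,
      MvPolynomial.aeval_X, MvPolynomial.aeval_X] at h
    simp only [Matrix.cons_val_zero, Matrix.cons_val_one, Matrix.head_cons] at h
    rw [aeval_CX, aeval_outerX] at h
    exact h
  have eg : (Polynomial.C Polynomial.X - Polynomial.X) * Dg
      = Polynomial.C f * g.map Polynomial.C - f.map Polynomial.C * Polynomial.C g := by
    have h := congrArg Φ hδg
    rw [map_mul, map_sub, map_sub, map_mul, map_mul, MvPolynomial.aeval_X, MvPolynomial.aeval_X,
      ← Polynomial.aeval_algHom_apply, ← Polynomial.aeval_algHom_apply,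
      ← Polynomial.aeval_algHom_apply, ← Polynomial.aeval_algHom_apply,
      MvPolynomial.aeval_X, MvPolynomial.aeval_X] at h
    simp only [Matrix.cons_val_zero, Matrix.cons_val_one, Matrix.head_cons] at h
    rw [aeval_CX, aeval_CX, aeval_outerX, aeval_outerX] at h
    exact h
  -- the interpolation cofactor H
  have heval : (g.map (Polynomial.C : ℚ →+* Polynomial ℚ)).eval Polynomial.X = g := by
    rw [Polynomial.eval_map, Polynomial.eval₂_C_X]
  obtain ⟨H, hH⟩ : (Polynomial.X - Polynomial.C Polynomial.X) ∣
      (g.map Polynomial.C - Polynomial.C g) := by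
    have h := Polynomial.X_sub_C_dvd_sub_C_eval (a := Polynomial.X)
      (p := g.map (Polynomial.C : ℚ →+* Polynomial ℚ))
    rwa [heval] at h
  have hCXne : (Polynomial.C Polynomial.X - Polynomial.X : Polynomial (Polynomial ℚ)) ≠ 0 := by
    intro h
    exact Polynomial.X_sub_C_ne_zero Polynomial.X (sub_eq_zero.mpr (sub_eq_zero.mp h).symm)
  have key : Polynomial.C g * D1 - Dg = Polynomial.C f * H := by
    apply mul_left_cancel₀ hCXne
    linear_combination Polynomial.C g * e1 - eg - Polynomial.C f * hH
  -- column-wise identity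
  have hcol : ∀ j : ℕ, g * D1.coeff j - Dg.coeff j = f * H.coeff j := by
    intro j
    have h := congrArg (fun P : Polynomial (Polynomial ℚ) => P.coeff j) key
    simpa [Polynomial.coeff_sub, Polynomial.coeff_C_mul] using h
  -- degree bounds for the columns
  have hb : ∀ D' E : Polynomial (Polynomial ℚ),
      (Polynomial.X - Polynomial.C Polynomial.X) * D' = E → E.natDegree ≤ d →
      ∀ m : ℕ, d ≤ m → D'.coeff m = 0 := by
    intro D' E hE hEd m hm
    rcases eq_or_ne D' 0 with rfl | hne
    · simp
    · apply Polynomial.coeff_eq_zero_of_natDegree_lt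
      have h2 : ((Polynomial.X - Polynomial.C Polynomial.X) * D').natDegree
          = 1 + D'.natDegree := by
        rw [Polynomial.natDegree_mul (Polynomial.X_sub_C_ne_zero _) hne,
          Polynomial.natDegree_X_sub_C]
      rw [hE] at h2
      omega
  have e1' : (Polynomial.X - Polynomial.C Polynomial.X) * (Φ' δ1)
      = f.map Polynomial.C - Polynomial.C f := by
    have h := congrArg Φ' hδ1
    rw [map_mul, map_sub, map_sub, MvPolynomial.aeval_X, MvPolynomial.aeval_X,
      ← Polynomial.aeval_algHom_apply, ← Polynomial.aeval_algHom_apply,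
      MvPolynomial.aeval_X, MvPolynomial.aeval_X] at h
    simp only [Matrix.cons_val_zero, Matrix.cons_val_one, Matrix.head_cons] at h
    rw [aeval_CX, aeval_outerX] at h
    exact h
  have eg' : (Polynomial.X - Polynomial.C Polynomial.X) * (Φ' δg)
      = f.map Polynomial.C * Polynomial.C g - Polynomial.C f * g.map Polynomial.C := by
    have h := congrArg Φ' hδg
    rw [map_mul, map_sub, map_sub, map_mul, map_mul, MvPolynomial.aeval_X, MvPolynomial.aeval_X,
      ← Polynomial.aeval_algHom_apply, ← Polynomial.aeval_algHom_apply,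
      ← Polynomial.aeval_algHom_apply, ← Polynomial.aeval_algHom_apply,
      MvPolynomial.aeval_X, MvPolynomial.aeval_X] at h
    simp only [Matrix.cons_val_zero, Matrix.cons_val_one, Matrix.head_cons] at h
    rw [aeval_CX, aeval_CX, aeval_outerX, aeval_outerX] at h
    exact h
  have hbd1 : ∀ m : ℕ, d ≤ m → (Φ' δ1).coeff m = 0 := by
    apply hb _ _ e1'
    calc (f.map Polynomial.C - Polynomial.C f).natDegree
        ≤ max (f.map (Polynomial.C : ℚ →+* Polynomial ℚ)).natDegree
          (Polynomial.C f).natDegree := Polynomial.natDegree_sub_le _ _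
      _ ≤ d := by
          apply max_le
          · exact le_trans Polynomial.natDegree_map_le (le_of_eq hfnd)
          · rw [Polynomial.natDegree_C]; omega
  have hbdg : ∀ m : ℕ, d ≤ m → (Φ' δg).coeff m = 0 := by
    apply hb _ _ eg'
    calc (f.map Polynomial.C * Polynomial.C g
          - Polynomial.C f * g.map Polynomial.C).natDegree
        ≤ max (f.map (Polynomial.C : ℚ →+* Polynomial ℚ) * Polynomial.C g).natDegree
          (Polynomial.C f * g.map (Polynomial.C : ℚ →+* Polynomial ℚ)).natDegree :=
        Polynomial.natDegree_sub_le _ _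
      _ ≤ d := by
          apply max_le
          · refine le_trans (Polynomial.natDegree_mul_le) ?_
            have h1 : (f.map (Polynomial.C : ℚ →+* Polynomial ℚ)).natDegree ≤ f.natDegree :=
              Polynomial.natDegree_map_le
            have h2 : (Polynomial.C g).natDegree = 0 := Polynomial.natDegree_C _
            omega
          · refine le_trans (Polynomial.natDegree_mul_le) ?_
            have h1 : (g.map (Polynomial.C : ℚ →+* Polynomial ℚ)).natDegree ≤ g.natDegree :=
              Polynomial.natDegree_map_le
            have h2 : (Polynomial.C f).natDegree = 0 := Polynomial.natDegree_C _
            omega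
  -- coefficient bound transferred to the columns of D1, Dg
  have hc1 : ∀ (i j : ℕ), d ≤ i → (D1.coeff j).coeff i = 0 := by
    intro i j hi
    rw [hD1, hΦ, coeff_aeval_CXX, ← coeff_aeval_XCX, ← hΦ', hbd1 i hi, Polynomial.coeff_zero]
  have hcg : ∀ (i j : ℕ), d ≤ i → (Dg.coeff j).coeff i = 0 := by
    intro i j hi
    rw [hDg, hΦ, coeff_aeval_CXX, ← coeff_aeval_XCX, ← hΦ', hbdg i hi, Polynomial.coeff_zero]
  have hdegc1 : ∀ j : ℕ, (D1.coeff j).degree < f₀.degree := by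
    intro j
    rw [hdegf₀, Polynomial.degree_lt_iff_coeff_zero]
    intro m hm
    exact hc1 m j hm
  have hdegcg : ∀ j : ℕ, (Dg.coeff j).degree < f₀.degree := by
    intro j
    rw [hdegf₀, Polynomial.degree_lt_iff_coeff_zero]
    intro m hm
    exact hcg m j hm
  have hself : ∀ j : ℕ, (D1.coeff j) %ₘ f₀ = D1.coeff j := fun j =>
    (Polynomial.modByMonic_eq_self_iff hmon).mpr (hdegc1 j)
  have hrem : ∀ j : ℕ, (g * D1.coeff j) %ₘ f₀ = Dg.coeff j := by
    intro j
    refine (Polynomial.div_modByMonic_unique (Polynomial.C (a 0) * H.coeff j)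
      (Dg.coeff j) hmon ⟨?_, hdegcg j⟩).2
    have h := hcol j
    have h2 : f * H.coeff j = f₀ * (Polynomial.C (a 0) * H.coeff j) := by
      rw [hffac]; ring
    linear_combination -h - h2
  -- first conjunct
  have main1 : Polynomial.aeval X g * B1 = Bg := by
    ext i j
    have hcolB1 : (fun k : Fin d => B1 k j)
        = fun k : Fin d => ((D1.coeff (j : ℕ)) %ₘ f₀).coeff (k : ℕ) := by
      funext k
      rw [hB1 k j, hself, hD1, hΦ, coeff_aeval_CXX]
    have happ := companion_aeval_mulVec d hd a ha f₀ hmon hf₀nd hcf X hX g (D1.coeff (j : ℕ))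
    have hmv : (Polynomial.aeval X g * B1) i j
        = ((Polynomial.aeval X g).mulVec (fun k : Fin d => B1 k j)) i := by
      simp [Matrix.mulVec, dotProduct, Matrix.mul_apply]
    rw [hmv, hcolB1, happ]
    rw [hrem (j : ℕ), hBg i j, ← coeff_aeval_CXX, ← hΦ, ← hDg]
  refine ⟨main1, ?_⟩
  -- invertibility of B1
  have hB1e : ∀ i j : Fin d, B1 i j =
      if (i : ℕ) + (j : ℕ) ≤ d - 1 then a (d - 1 - (i : ℕ) - (j : ℕ)) else 0 := by
    intro i j
    rw [hB1 i j, delta1_explicit d a f hf δ1 hδ1, coeff_delta1 d hd a i j i.isLt j.isLt]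
  have hdet := B1_det_isUnit d hd a ha B1 hB1e
  rw [← main1, Matrix.mul_assoc, Matrix.mul_nonsing_inv _ hdet, Matrix.mul_one]
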